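/- Let $a,b>0$, $\ell > (\sqrt{a}+\sqrt{b})^2$, and $D = \ell^2-2(a+b)\ell+(a-b)^2$. Then $\mathrm{J}(\ell) := \sqrt{D} + a\log\left(\frac{\ell+a-b-\sqrt{D}}{\ell+a-b+\sqrt{D}}\right) + b\log\left(\frac{\ell-a+b-\sqrt{D}}{\ell-a+b+\sqrt{D}}\right) = \mathrm{G}(z^+) - \mathrm{G}(z^-) > 0$, where $\mathrm{G}(z) = -a\log(z+1)+b\log z+\ell z$ and $z^\pm = \frac{-\ell+a-b\pm\sqrt{D}}{2\ell}$; in particular $\mathrm{J}(\ell) > 0$. -/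

import Mathlib

set_option maxHeartbeats 1000000 in
theorem stmt_19 (a b ℓ D : ℝ) (ha : 0 < a) (hb : 0 < b)
    (hl : (Real.sqrt a + Real.sqrt b) ^ 2 < ℓ)
    (hD : D = ℓ ^ 2 - 2 * (a + b) * ℓ + (a - b) ^ 2)
    (G : ℝ → ℝ)
    (hG : ∀ z, G z = -a * Real.log (z + 1) + b * Real.log z + ℓ * z)
    (zp zm J : ℝ)
    (hzp : zp = (-ℓ + a - b + Real.sqrt D) / (2 * ℓ))
    (hzm : zm = (-ℓ + a - b - Real.sqrt D) / (2 * ℓ))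
    (hJ : J = Real.sqrt D +
      a * Real.log ((ℓ + a - b - Real.sqrt D) / (ℓ + a - b + Real.sqrt D)) +
      b * Real.log ((ℓ - a + b - Real.sqrt D) / (ℓ - a + b + Real.sqrt D))) :
    J = G zp - G zm ∧ 0 < J := by
  have hsa : Real.sqrt a ^ 2 = a := Real.sq_sqrt ha.le
  have hsb : Real.sqrt b ^ 2 = b := Real.sq_sqrt hb.le
  have hsa0 : 0 < Real.sqrt a := Real.sqrt_pos.2 ha
  have hsb0 : 0 < Real.sqrt b := Real.sqrt_pos.2 hb
  have hl0 : 0 < ℓ := lt_trans (by positivity) hl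
  have hla : a < ℓ := by nlinarith
  have hlb : b < ℓ := by nlinarith
  have hfac2 : 0 < ℓ - (Real.sqrt a - Real.sqrt b) ^ 2 := by nlinarith [mul_pos hsa0 hsb0]
  have hD0 : 0 < D := by
    nlinarith [mul_pos (sub_pos.2 hl) hfac2]
  set s := Real.sqrt D with hsdef
  have hs0 : 0 < s := Real.sqrt_pos.2 hD0
  have hs2 : s ^ 2 = D := Real.sq_sqrt hD0.le
  have hApos : 0 < ℓ + a - b - s := by
    have : Real.sqrt D < ℓ + a - b :=
      (Real.sqrt_lt' (by linarith)).2 (by nlinarith [mul_pos ha hl0])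
    simp only [hsdef]; linarith
  have hBpos : 0 < ℓ - a + b - s := by
    have : Real.sqrt D < ℓ - a + b :=
      (Real.sqrt_lt' (by linarith)).2 (by nlinarith [mul_pos hb hl0])
    simp only [hsdef]; linarith
  have hApos' : 0 < ℓ + a - b + s := by linarith
  have hBpos' : 0 < ℓ - a + b + s := by linarith
  -- coordinates
  have e1 : zp + 1 = (ℓ + a - b + s) / (2 * ℓ) := by
    rw [hzp]; field_simp; ring
  have e2 : zm + 1 = (ℓ + a - b - s) / (2 * ℓ) := by
    rw [hzm]; field_simp; ring
  have e3 : -zp = (ℓ - a + b - s) / (2 * ℓ) := by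
    rw [hzp]; field_simp; ring
  have e4 : -zm = (ℓ - a + b + s) / (2 * ℓ) := by
    rw [hzm]; field_simp; ring
  have h2l : (0:ℝ) < 2 * ℓ := by linarith
  have d1 : Real.log ((ℓ + a - b - s) / (ℓ + a - b + s))
      = Real.log (zm + 1) - Real.log (zp + 1) := by
    rw [e1, e2, Real.log_div hApos.ne' hApos'.ne',
      Real.log_div hApos.ne' h2l.ne', Real.log_div hApos'.ne' h2l.ne']
    ring
  have d2 : Real.log ((ℓ - a + b - s) / (ℓ - a + b + s))
      = Real.log zp - Real.log zm := by
    rw [← Real.log_neg_eq_log zp, ← Real.log_neg_eq_log zm, e3, e4,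
      Real.log_div hBpos.ne' hBpos'.ne',
      Real.log_div hBpos.ne' h2l.ne', Real.log_div hBpos'.ne' h2l.ne']
    ring
  have d3 : ℓ * zp - ℓ * zm = s := by
    rw [hzp, hzm]; field_simp; ring
  have hJeq : J = G zp - G zm := by
    rw [hJ, hG zp, hG zm, d1, d2]
    linarith [d3]
  refine ⟨hJeq, ?_⟩
  rw [hJeq]
  have hzmlt : zm < zp := by
    by_contra hcon
    push_neg at hcon
    have := mul_le_mul_of_nonneg_left hcon hl0.le
    linarith [d3, hs0]
  have hzm1 : -1 < zm := by
    have h := div_pos hApos h2l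
    rw [← e2] at h; linarith
  have hzp0 : zp < 0 := by
    have h := div_pos hBpos h2l
    rw [← e3] at h; linarith
  -- derivative of G
  have hderiv : ∀ x ∈ Set.Ioo zm zp,
      HasDerivAt G (-a * (1 / (x + 1)) + b * (1 / x) + ℓ) x := by
    intro x hx
    have hx1 : 0 < x + 1 := by linarith [hx.1]
    have hx0 : x < 0 := lt_trans hx.2 hzp0
    have h1 : HasDerivAt (fun z : ℝ => Real.log (z + 1)) (1 / (x + 1)) x := by
      have := (Real.hasDerivAt_log hx1.ne').comp x ((hasDerivAt_id x).add_const 1)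
      exact this.congr_deriv (by simp)
    have h2 : HasDerivAt (fun z : ℝ => Real.log z) (1 / x) x := by
      simpa using Real.hasDerivAt_log hx0.ne
    have h3 : HasDerivAt (fun z : ℝ =>
        -a * Real.log (z + 1) + b * Real.log z + ℓ * z)
        (-a * (1 / (x + 1)) + b * (1 / x) + ℓ) x := by
      have := ((h1.const_mul (-a)).add (h2.const_mul b)).add
        ((hasDerivAt_id x).const_mul ℓ)
      exact this.congr_deriv (by simp)
    have hGfun : G = fun z : ℝ =>
        -a * Real.log (z + 1) + b * Real.log z + ℓ * z := funext hG
    rw [hGfun]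
    exact h3
  have hcont : ContinuousOn G (Set.Icc zm zp) := by
    have hGfun : G = fun z : ℝ =>
        -a * Real.log (z + 1) + b * Real.log z + ℓ * z := funext hG
    rw [hGfun]
    have c1 : ContinuousOn (fun z : ℝ => Real.log (z + 1)) (Set.Icc zm zp) := by
      apply ContinuousOn.log (by fun_prop)
      intro x hx
      have : -1 < x := lt_of_lt_of_le hzm1 hx.1
      intro h; linarith [h]
    have c2 : ContinuousOn (fun z : ℝ => Real.log z) (Set.Icc zm zp) := by
      apply ContinuousOn.log continuousOn_id
      intro x hx
      have : x < 0 := lt_of_le_of_lt hx.2 hzp0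
      exact this.ne
    exact ((continuousOn_const.mul c1).add (continuousOn_const.mul c2)).add
      (continuousOn_const.mul continuousOn_id)
  obtain ⟨c, hc, hceq⟩ := exists_hasDerivAt_eq_slope G _ hzmlt hcont hderiv
  have hc1 : 0 < c + 1 := by linarith [hc.1]
  have hc0 : c < 0 := lt_trans hc.2 hzp0
  have hsum' : ℓ * (zm + zp) = a - b - ℓ := by
    rw [hzm, hzp]; field_simp; ring
  have hMP : (ℓ - a + b - s) * (ℓ - a + b + s) = 4 * b * ℓ := by
    linear_combination (-1 : ℝ) * hD - hs2
  have hprod' : ℓ * (zm * zp) = b := by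
    have h : zm * zp = ((ℓ - a + b + s) / (2 * ℓ)) * ((ℓ - a + b - s) / (2 * ℓ)) := by
      rw [← e4, ← e3]; ring
    rw [h, div_mul_div_comm, mul_comm (ℓ - a + b + s) (ℓ - a + b - s), hMP]
    field_simp
    ring
  have hquad : ℓ * c ^ 2 + (ℓ - a + b) * c + b = ℓ * (c - zm) * (c - zp) := by
    linear_combination c * hsum' - hprod'
  have hneg : ℓ * (c - zm) * (c - zp) < 0 :=
    mul_neg_of_pos_of_neg (mul_pos hl0 (sub_pos.2 hc.1)) (sub_neg.2 hc.2)
  have hden : c * (c + 1) < 0 := mul_neg_of_neg_of_pos hc0 hc1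
  have key : -a * (1 / (c + 1)) + b * (1 / c) + ℓ
      = (ℓ * c ^ 2 + (ℓ - a + b) * c + b) / (c * (c + 1)) := by
    field_simp [hc0.ne, hc1.ne']
    ring
  have hpos : 0 < -a * (1 / (c + 1)) + b * (1 / c) + ℓ := by
    rw [key]
    exact div_pos_of_neg_of_neg (by linarith [hquad ▸ hneg]) hden
  rw [hceq] at hpos
  have hd : 0 < zp - zm := by linarith
  have := (div_pos_iff.1 hpos)
  rcases this with ⟨h1, _⟩ | ⟨_, h2⟩
  · linarith
  · linarith
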